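/- arXiv:2003.11759 — 3 statements merged into one kernel-verified Lean document; each statement's English description precedes it below -/
import Mathlib

section
/- Let n ≥ 2, p > 1, let H be a gauge on ℝ^n that is smooth on ℝ^n \ {0}, set Ĥ(ξ) = H(−ξ) and V(ξ) = Ĥ(ξ)^p/p. Let Ω ⊆ ℝ^n be open and let v ∈ C³(Ω) satisfy v(x) > 0 and ∇v(x) ≠ 0 for every x ∈ Ω. Define the matrix field W(x) with entries W_{ij}(x) = ∂_j[(∇_ξ V)(∇v)]_i(x) (the Jacobian of x ↦ ∇_ξV(∇v(x))), the anisotropic p-Laplacian Δ_p^Ĥ v = div(Ĥ(∇v)^{p−1}∇Ĥ(∇v)) = tr W, and S²(W) = ½((tr W)² − tr(W²)), S²_{ij}(W) = −W_{ji} + δ_{ij} tr W. Then the following pointwise differential identity holds on Ω: 2v^{1−n}S²(W) + (n−1)np(p−1)v^{−n−1}V(∇v)² + (1−n)(2p−1)v^{−n}V(∇v)Δ_p^Ĥ v = div( v^{1−n} X + (1−n)(p−1)v^{−n}V(∇v)∇_ξV(∇v) ), where X is the vector field with components X_j = Σ_i S²_{ij}(W)(∇_ξ V)_i(∇v). -/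
open MeasureTheory
open scoped ENNReal NNReal

noncomputable section

section AuxiliaryLemmas



variable {n : ℕ}

abbrev ES (n : ℕ) := EuclideanSpace ℝ (Fin n)

lemma esum_decomp (w : ES n) : w = ∑ i, w i • EuclideanSpace.single i (1:ℝ) := by
  ext j
  have : (∑ i, w i • EuclideanSpace.single i (1:ℝ)) j
      = ∑ i, (w i • EuclideanSpace.single i (1:ℝ)) j :=
    by rw [WithLp.ofLp_sum, Finset.sum_apply]
  rw [this]
  simp [EuclideanSpace.single_apply]

lemma grad_coord (f : ES n → ℝ) (x : ES n) (i : Fin n) :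
    gradient f x i = fderiv ℝ f x (EuclideanSpace.single i (1:ℝ)) := by
  have : fderiv ℝ f x (EuclideanSpace.single i (1:ℝ)) = @inner ℝ _ _ (gradient f x) (EuclideanSpace.single i (1:ℝ)) := by
    rw [gradient]; simp
  rw [this, EuclideanSpace.inner_single_right]; simp

lemma fderiv_expand {f : ES n → ℝ} {x : ES n} (w : ES n) :
    fderiv ℝ f x w = ∑ i, w i * fderiv ℝ f x (EuclideanSpace.single i (1:ℝ)) := by
  conv_lhs => rw [esum_decomp w]
  rw [map_sum]
  simp

section Vlemmas
variable {p : ℝ} (hp : 1 < p) {H V : ES n → ℝ}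
  (hH_hom : ∀ t : ℝ, 0 < t → ∀ ξ : ES n, H (t • ξ) = t * H ξ)
  (hH_pos : ∀ ξ : ES n, ξ ≠ 0 → 0 < H ξ)
  (hH_smooth : ContDiffOn ℝ (⊤ : ℕ∞) H {(0 : ES n)}ᶜ)
  (hV : ∀ ξ : ES n, V ξ = H (-ξ) ^ p / p)

include hH_hom in
lemma H_zero : H 0 = 0 := by
  have := hH_hom 2 (by norm_num) 0
  simp at this
  linarith

include hH_hom hH_pos in
lemma H_nonneg (ξ : ES n) : 0 ≤ H ξ := by
  rcases eq_or_ne ξ 0 with rfl | h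
  · rw [H_zero hH_hom]
  · exact (hH_pos ξ h).le

include hH_hom hH_pos hV in
lemma V_hom : ∀ t : ℝ, 0 < t → ∀ ξ : ES n, V (t • ξ) = t ^ p * V ξ := by
  intro t ht ξ
  rw [hV, hV]
  have h1 : -(t • ξ) = t • (-ξ) := by rw [smul_neg]
  rw [h1, hH_hom t ht, Real.mul_rpow ht.le (H_nonneg hH_hom hH_pos _)]
  ring

include hp hH_pos hH_smooth hV in
lemma V_cd {ξ : ES n} (hξ : ξ ≠ 0) : ContDiffAt ℝ 3 V ξ := by
  have hfun : V = fun ξ => H (-ξ) ^ p / p := funext hV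
  rw [hfun]
  apply ContDiffAt.div_const
  apply ContDiffAt.rpow_const_of_ne
  · have h1 : ContDiffAt ℝ 3 H (-ξ) := by
      have := hH_smooth.contDiffAt (x := -ξ)
        (IsOpen.mem_nhds isOpen_compl_singleton (by simpa using hξ))
      exact this.of_le (by rw [show (3 : WithTop ℕ∞) = ((3:ℕ∞) : WithTop ℕ∞) by norm_cast]; exact WithTop.coe_le_coe.2 le_top)
    exact h1.comp ξ (contDiff_neg.contDiffAt)
  · exact ne_of_gt (hH_pos (-ξ) (neg_ne_zero.2 hξ))

include hp hH_hom hH_pos hH_smooth hV in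
lemma V_euler1 {ξ : ES n} (hξ : ξ ≠ 0) :
    ∑ i, gradient V ξ i * ξ i = p * V ξ := by
  have hdiff : DifferentiableAt ℝ V ξ :=
    (V_cd hp hH_pos hH_smooth hV hξ).differentiableAt (by norm_num)
  have h2 : HasDerivAt (fun t : ℝ => t • ξ) ξ 1 := by
    simpa using (hasDerivAt_id (1:ℝ)).smul_const ξ
  have h1 : HasDerivAt (fun t : ℝ => V (t • ξ)) (fderiv ℝ V ξ ξ) 1 := by
    have hd' : HasFDerivAt V (fderiv ℝ V ξ) ((1:ℝ) • ξ) := by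
      rw [one_smul]; exact hdiff.hasFDerivAt
    have := hd'.comp_hasDerivAt 1 h2
    exact this
  have h3 : HasDerivAt (fun t : ℝ => t ^ p * V ξ) (p * V ξ) 1 := by
    have := (Real.hasDerivAt_rpow_const (p := p) (x := (1:ℝ)) (Or.inl one_ne_zero)).mul_const (V ξ)
    simpa using this
  have heq : (fun t : ℝ => V (t • ξ)) =ᶠ[nhds 1] fun t : ℝ => t ^ p * V ξ := by
    filter_upwards [eventually_gt_nhds zero_lt_one] with t ht
    exact V_hom hH_hom hH_pos hV t ht ξ
  have h4 : fderiv ℝ V ξ ξ = p * V ξ := by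
    have h1' : HasDerivAt (fun t : ℝ => t ^ p * V ξ) (fderiv ℝ V ξ ξ) 1 :=
      h1.congr_of_eventuallyEq heq.symm
    exact h1'.unique h3
  rw [← h4, fderiv_expand ξ]
  congr 1; funext i
  rw [grad_coord]; ring

include hp hH_hom hH_pos hH_smooth hV in
lemma gradV_hom {t : ℝ} (ht : 0 < t) {ξ : ES n} (hξ : ξ ≠ 0) (i : Fin n) :
    gradient V (t • ξ) i = t ^ (p - 1) * gradient V ξ i := by
  have hdiff : DifferentiableAt ℝ V ξ :=
    (V_cd hp hH_pos hH_smooth hV hξ).differentiableAt (by norm_num)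
  have hdiff2 : DifferentiableAt ℝ V (t • ξ) :=
    (V_cd hp hH_pos hH_smooth hV (by simp [smul_eq_zero, ht.ne', hξ])).differentiableAt
      (by norm_num)
  have hA : HasFDerivAt (fun y : ES n => V (t • y))
      ((fderiv ℝ V (t • ξ)).comp (t • ContinuousLinearMap.id ℝ (ES n))) ξ := by
    have hsm : HasFDerivAt (fun y : ES n => t • y) (t • ContinuousLinearMap.id ℝ (ES n)) ξ :=
      (hasFDerivAt_id ξ).const_smul t
    exact hdiff2.hasFDerivAt.comp ξ hsm
  have hB : HasFDerivAt (fun y : ES n => V (t • y)) (t ^ p • fderiv ℝ V ξ) ξ := by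
    have hfe : (fun y : ES n => V (t • y)) = fun y : ES n => t ^ p * V y := by
      funext y; exact V_hom hH_hom hH_pos hV t ht y
    rw [hfe]
    simpa using hdiff.hasFDerivAt.const_mul (t ^ p)
  have hC := hA.unique hB
  have h5 : t * fderiv ℝ V (t • ξ) (EuclideanSpace.single i (1:ℝ))
      = t ^ p * fderiv ℝ V ξ (EuclideanSpace.single i (1:ℝ)) := by
    have := congrFun (congrArg DFunLike.coe hC) (EuclideanSpace.single i (1:ℝ))
    simpa [ContinuousLinearMap.smul_apply, smul_eq_mul, mul_comm] using this
  rw [grad_coord, grad_coord]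
  have htp : t ^ p = t * t ^ (p - 1) := by
    rw [Real.rpow_sub ht, Real.rpow_one]
    field_simp
  rw [htp, mul_assoc] at h5
  have := mul_left_cancel₀ ht.ne' h5
  rw [this]

include hp hH_hom hH_pos hH_smooth hV in
lemma V_euler2 {ξ : ES n} (hξ : ξ ≠ 0) (i : Fin n) :
    ∑ m, fderiv ℝ (fun y => gradient V y i) ξ (EuclideanSpace.single m (1:ℝ)) * ξ m
      = (p - 1) * gradient V ξ i := by
  have hGi : (fun y : ES n => gradient V y i)
      = fun y : ES n => fderiv ℝ V y (EuclideanSpace.single i (1:ℝ)) := by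
    funext y; exact grad_coord V y i
  have hfd : DifferentiableAt ℝ (fderiv ℝ V) ξ := by
    have := (V_cd hp hH_pos hH_smooth hV hξ).fderiv_right (m := 1) (by norm_num)
    exact this.differentiableAt (by norm_num)
  have hGdiff : DifferentiableAt ℝ (fun y : ES n => gradient V y i) ξ := by
    rw [hGi]
    exact hfd.clm_apply (differentiableAt_const _)
  have h2 : HasDerivAt (fun t : ℝ => t • ξ) ξ 1 := by
    simpa using (hasDerivAt_id (1:ℝ)).smul_const ξ
  have h1 : HasDerivAt (fun t : ℝ => gradient V (t • ξ) i)
      (fderiv ℝ (fun y => gradient V y i) ξ ξ) 1 := by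
    have hd' : HasFDerivAt (fun y => gradient V y i)
        (fderiv ℝ (fun y => gradient V y i) ξ) ((1:ℝ) • ξ) := by
      rw [one_smul]; exact hGdiff.hasFDerivAt
    have := hd'.comp_hasDerivAt 1 h2
    exact this
  have h3 : HasDerivAt (fun t : ℝ => t ^ (p - 1) * gradient V ξ i)
      ((p - 1) * gradient V ξ i) 1 := by
    have := (Real.hasDerivAt_rpow_const (p := p - 1) (x := (1:ℝ))
      (Or.inl one_ne_zero)).mul_const (gradient V ξ i)
    simpa using this
  have heq : (fun t : ℝ => gradient V (t • ξ) i)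
      =ᶠ[nhds 1] fun t : ℝ => t ^ (p - 1) * gradient V ξ i := by
    filter_upwards [eventually_gt_nhds zero_lt_one] with t ht
    exact gradV_hom hp hH_hom hH_pos hH_smooth hV ht hξ i
  have h4 : fderiv ℝ (fun y => gradient V y i) ξ ξ = (p - 1) * gradient V ξ i :=
    (h1.congr_of_eventuallyEq heq.symm).unique h3
  rw [← h4, fderiv_expand ξ]
  congr 1; funext m; ring

end Vlemmas


lemma fderiv_pi_coord {n : ℕ} {F : EuclideanSpace ℝ (Fin n) → EuclideanSpace ℝ (Fin n)}
    {x : EuclideanSpace ℝ (Fin n)} (hF : DifferentiableAt ℝ F x) (m : Fin n)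
    (w : EuclideanSpace ℝ (Fin n)) :
    fderiv ℝ (fun y => F y m) x w = fderiv ℝ F x w m := by
  have h0 : (fun y => F y m)
      = (fun z => (EuclideanSpace.proj m : EuclideanSpace ℝ (Fin n) →L[ℝ] ℝ) z) ∘ F := rfl
  rw [h0, fderiv_comp x (ContinuousLinearMap.differentiableAt _) hF]
  simp only [ContinuousLinearMap.fderiv]; rfl

lemma diff_fderiv_apply {E : Type*} [NormedAddCommGroup E] [NormedSpace ℝ E]
    {f : E → ℝ} {x : E} (hf : ContDiffAt ℝ 2 f x) (y' : E) :
    DifferentiableAt ℝ (fun z => fderiv ℝ f z y') x := by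
  have hd : DifferentiableAt ℝ (fderiv ℝ f) x := by
    have := hf.fderiv_right (m := 1) (by norm_num)
    exact this.differentiableAt (by norm_num)
  exact hd.clm_apply (differentiableAt_const _)

lemma fderiv_fderiv_apply {E : Type*} [NormedAddCommGroup E] [NormedSpace ℝ E]
    {f : E → ℝ} {x : E} (hf : ContDiffAt ℝ 2 f x) (w y' : E) :
    fderiv ℝ (fun z => fderiv ℝ f z y') x w = fderiv ℝ (fderiv ℝ f) x w y' := by
  have hd : DifferentiableAt ℝ (fderiv ℝ f) x := by
    have := hf.fderiv_right (m := 1) (by norm_num)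
    exact this.differentiableAt (by norm_num)
  rw [fderiv_clm_apply hd (differentiableAt_const y')]
  simp

lemma clairaut {E : Type*} [NormedAddCommGroup E] [NormedSpace ℝ E]
    {f : E → ℝ} {x : E} (hf : ContDiffAt ℝ 2 f x) (w y : E) :
    fderiv ℝ (fun z => fderiv ℝ f z y) x w = fderiv ℝ (fun z => fderiv ℝ f z w) x y := by
  rw [fderiv_fderiv_apply hf, fderiv_fderiv_apply hf]
  exact hf.isSymmSndFDerivAt (by norm_num) w y

lemma fderiv_combo {E : Type*} [NormedAddCommGroup E] [NormedSpace ℝ E]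
    {ι : Type*} [Fintype ι] {x w : E}
    (f h P : E → ℝ) (g s : ι → E → ℝ) (C : ℝ) (j : ι)
    (hf : DifferentiableAt ℝ f x) (hh : DifferentiableAt ℝ h x)
    (hP : DifferentiableAt ℝ P x)
    (hg : ∀ i, DifferentiableAt ℝ (g i) x) (hs : ∀ i, DifferentiableAt ℝ (s i) x) :
    fderiv ℝ (fun y => f y * (∑ i, s i y * g i y) + C * h y * P y * g j y) x w
      = fderiv ℝ f x w * (∑ i, s i x * g i x)
        + f x * (∑ i, (fderiv ℝ (s i) x w * g i x + s i x * fderiv ℝ (g i) x w))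
        + C * (fderiv ℝ h x w * (P x * g j x)
            + h x * (fderiv ℝ P x w * g j x + P x * fderiv ℝ (g j) x w)) := by
  have h1 : HasFDerivAt (fun y => ∑ i, s i y * g i y)
      (∑ i, (s i x • fderiv ℝ (g i) x + g i x • fderiv ℝ (s i) x)) x :=
    HasFDerivAt.fun_sum (fun i _ => ((hs i).hasFDerivAt.mul (hg i).hasFDerivAt))
  have H := (hf.hasFDerivAt.fun_mul' h1).fun_add
    ((((hh.hasFDerivAt.const_mul C).fun_mul' hP.hasFDerivAt)).fun_mul' (hg j).hasFDerivAt)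
  have := H.fderiv
  rw [this]
  simp only [ContinuousLinearMap.add_apply, ContinuousLinearMap.smul_apply,
    ContinuousLinearMap.smulRight_apply, ContinuousLinearMap.coe_sum', Finset.sum_apply,
    op_smul_eq_smul, smul_eq_mul, Finset.mul_sum, Finset.sum_mul]
  rw [← Finset.sum_add_distrib, ← Finset.sum_add_distrib]
  congr 1
  · exact Finset.sum_congr rfl fun i _ => by ring
  · ring


lemma final_algebra {n : ℕ} (p vx P : ℝ) (d uu q : Fin n → ℝ)
    (a : Fin n → Fin n → ℝ) (b : Fin n → Fin n → Fin n → ℝ)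
    (hb : ∀ i k l, b i k l = b i l k)
    (he1 : ∑ i, uu i * d i = p * P)
    (hk3 : ∀ i, ∑ j, a j i * d j = (p - 1) * q i) :
    2 * vx ^ (1 - (n:ℝ)) * (((∑ k, a k k) ^ 2 - ∑ i, ∑ k, a i k * a k i) / 2)
      + ((n:ℝ) - 1) * (n:ℝ) * p * (p - 1) * vx ^ (-(n:ℝ) - 1) * P ^ 2
      + (1 - (n:ℝ)) * (2 * p - 1) * vx ^ (-(n:ℝ)) * P * (∑ k, a k k)
    = ∑ j, (((1 - (n:ℝ)) * vx ^ (1 - (n:ℝ) - 1) * d j) *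
          (∑ i, (-(a j i) + (if i = j then 1 else 0) * (∑ k, a k k)) * uu i)
        + vx ^ (1 - (n:ℝ)) *
          (∑ i, ((-(b j i j) + (if i = j then 1 else 0) * (∑ k, b k k j)) * uu i
            + (-(a j i) + (if i = j then 1 else 0) * (∑ k, a k k)) * a i j))
        + ((1 - (n:ℝ)) * (p - 1)) *
          ((-(n:ℝ) * vx ^ (-(n:ℝ) - 1) * d j) * (P * uu j)
            + vx ^ (-(n:ℝ)) * (q j * uu j + P * a j j))) := by
  rw [show (1 : ℝ) - (n:ℝ) - 1 = -(n:ℝ) from by ring]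
  have hite : ∀ (j : Fin n) (t : ℝ) (r : Fin n → ℝ),
      (∑ i, ((if i = j then (1:ℝ) else 0) * t) * r i) = t * r j := by
    intro j t r
    rw [Finset.sum_congr rfl (fun i _ => by
      rw [ite_mul, ite_mul, one_mul, zero_mul, zero_mul] :
        ∀ i ∈ Finset.univ, ((if i = j then (1:ℝ) else 0) * t) * r i
          = if i = j then t * r i else 0)]
    simp
  have hsum1 : ∀ j : Fin n, (∑ i, (-(a j i) + (if i = j then 1 else 0) * (∑ k, a k k)) * uu i)
      = -(∑ i, a j i * uu i) + (∑ k, a k k) * uu j := by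
    intro j
    rw [Finset.sum_congr rfl (fun i _ => add_mul (-(a j i))
      ((if i = j then 1 else 0) * (∑ k, a k k)) (uu i)), Finset.sum_add_distrib, hite]
    congr 1
    rw [← Finset.sum_neg_distrib]
    exact Finset.sum_congr rfl fun i _ => by ring
  have hsum2 : ∀ j : Fin n,
      (∑ i, ((-(b j i j) + (if i = j then 1 else 0) * (∑ k, b k k j)) * uu i
        + (-(a j i) + (if i = j then 1 else 0) * (∑ k, a k k)) * a i j))
      = ((-(∑ i, b j i j * uu i) + (∑ k, b k k j) * uu j)
        + (-(∑ i, a j i * a i j) + (∑ k, a k k) * a j j)) := by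
    intro j
    rw [Finset.sum_add_distrib]
    congr 1
    · rw [Finset.sum_congr rfl (fun i _ => add_mul _ _ (uu i)), Finset.sum_add_distrib, hite]
      congr 1
      rw [← Finset.sum_neg_distrib]
      exact Finset.sum_congr rfl fun i _ => by ring
    · rw [Finset.sum_congr rfl (fun i _ => add_mul _ _ (a i j)), Finset.sum_add_distrib, hite]
      congr 1
      rw [← Finset.sum_neg_distrib]
      exact Finset.sum_congr rfl fun i _ => by ring
  rw [Finset.sum_congr rfl (fun j _ => by rw [hsum1 j, hsum2 j]; ring :
    ∀ j ∈ Finset.univ,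
      (((1 - (n:ℝ)) * vx ^ (-(n:ℝ)) * d j) *
          (∑ i, (-(a j i) + (if i = j then 1 else 0) * (∑ k, a k k)) * uu i)
        + vx ^ (1 - (n:ℝ)) *
          (∑ i, ((-(b j i j) + (if i = j then 1 else 0) * (∑ k, b k k j)) * uu i
            + (-(a j i) + (if i = j then 1 else 0) * (∑ k, a k k)) * a i j))
        + ((1 - (n:ℝ)) * (p - 1)) *
          ((-(n:ℝ) * vx ^ (-(n:ℝ) - 1) * d j) * (P * uu j)
            + vx ^ (-(n:ℝ)) * (q j * uu j + P * a j j)))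
      = (-((1 - (n:ℝ)) * vx ^ (-(n:ℝ)))) * (d j * (∑ i, a j i * uu i))
        + ((1 - (n:ℝ)) * vx ^ (-(n:ℝ)) * (∑ k, a k k)) * (d j * uu j)
        + (-(vx ^ (1 - (n:ℝ)))) * (∑ i, b j i j * uu i)
        + vx ^ (1 - (n:ℝ)) * ((∑ k, b k k j) * uu j)
        + (-(vx ^ (1 - (n:ℝ)))) * (∑ i, a j i * a i j)
        + (vx ^ (1 - (n:ℝ)) * (∑ k, a k k)) * a j j
        + ((1 - (n:ℝ)) * (p - 1) * (-(n:ℝ)) * vx ^ (-(n:ℝ) - 1) * P) * (d j * uu j)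
        + ((1 - (n:ℝ)) * (p - 1) * vx ^ (-(n:ℝ))) * (q j * uu j)
        + ((1 - (n:ℝ)) * (p - 1) * vx ^ (-(n:ℝ)) * P) * a j j)]
  simp only [Finset.sum_add_distrib]
  rw [← Finset.mul_sum, ← Finset.mul_sum, ← Finset.mul_sum, ← Finset.mul_sum,
    ← Finset.mul_sum, ← Finset.mul_sum, ← Finset.mul_sum, ← Finset.mul_sum, ← Finset.mul_sum]
  have hdu : ∑ j, d j * uu j = p * P := by
    rw [← he1]; exact Finset.sum_congr rfl fun i _ => by ring
  have hdA : ∑ j, d j * (∑ i, a j i * uu i) = (p - 1) * ∑ i, q i * uu i := by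
    have h1 : ∀ j : Fin n, d j * (∑ i, a j i * uu i) = ∑ i, a j i * d j * uu i := by
      intro j; rw [Finset.mul_sum]; exact Finset.sum_congr rfl fun i _ => by ring
    rw [Finset.sum_congr rfl fun j _ => h1 j, Finset.sum_comm]
    have h2 : ∀ i : Fin n, (∑ j, a j i * d j * uu i) = (p - 1) * (q i * uu i) := by
      intro i
      have h3 : (∑ j, a j i * d j * uu i) = (∑ j, a j i * d j) * uu i := by
        rw [Finset.sum_mul]
      rw [h3, hk3 i]; ring
    rw [Finset.sum_congr rfl fun i _ => h2 i, ← Finset.mul_sum]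
  have hB : (∑ j, ∑ i, b j i j * uu i) = ∑ j, (∑ k, b k k j) * uu j := by
    rw [Finset.sum_comm]
    apply Finset.sum_congr rfl
    intro i _
    rw [Finset.sum_mul]
    exact Finset.sum_congr rfl fun k _ => by rw [hb k i k]
  have hD : (∑ j, ∑ i, a j i * a i j) = ∑ i, ∑ k, a i k * a k i := by
    rw [Finset.sum_comm]
  rw [hdu, hdA, hB, hD]
  ring


lemma grad_contDiffAt {n : ℕ} {f : ES n → ℝ} {x : ES n} {k m : WithTop ℕ∞}
    (hmk : m + 1 ≤ k) (hf : ContDiffAt ℝ k f x) :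
    ContDiffAt ℝ m (gradient f) x := by
  have h1 : ContDiffAt ℝ m (fderiv ℝ f) x := hf.fderiv_right hmk
  exact ((InnerProductSpace.toDual ℝ (ES n)).symm.contDiff.contDiffAt).comp x h1

lemma chain_coord {n : ℕ} (g : ES n → ES n) (φ : ES n → ℝ) (x : ES n)
    (hg : DifferentiableAt ℝ g x) (hφ : DifferentiableAt ℝ φ (g x)) (k : Fin n)
    (hexp : ∀ (f : ES n → ℝ) (z w : ES n),
      fderiv ℝ f z w = ∑ i, w i * fderiv ℝ f z (EuclideanSpace.single i 1))
    (hpc : ∀ (F : ES n → ES n) (z : ES n), DifferentiableAt ℝ F z → ∀ (m : Fin n) (w : ES n),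
      fderiv ℝ (fun y => F y m) z w = fderiv ℝ F z w m) :
    fderiv ℝ (fun y => φ (g y)) x (EuclideanSpace.single k 1)
      = ∑ m, fderiv ℝ (fun y => g y m) x (EuclideanSpace.single k 1)
          * fderiv ℝ φ (g x) (EuclideanSpace.single m 1) := by
  have hcomp : fderiv ℝ (fun y => φ (g y)) x = (fderiv ℝ φ (g x)).comp (fderiv ℝ g x) :=
    fderiv_comp x hφ hg
  rw [hcomp]
  simp only [ContinuousLinearMap.coe_comp', Function.comp_apply]
  rw [hexp φ (g x) (fderiv ℝ g x (EuclideanSpace.single k 1))]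
  exact Finset.sum_congr rfl fun m _ => by rw [hpc (g) x hg m]

end AuxiliaryLemmas

/-- The pointwise differential identity of Bianchini–Ciraolo:
for `v ∈ C³(Ω)` positive with nonvanishing gradient, `V(ξ) = Ĥ(ξ)^p/p` with `Ĥ(ξ) = H(-ξ)`,
`W = D(∇_ξV(∇v))`, `Δ_p^Ĥ v = tr W`, `S²(W) = ½((tr W)² - tr(W²))`,
`S²_{ij}(W) = -W_{ji} + δ_{ij} tr W`, one has on `Ω`:
`2 v^{1-n} S²(W) + (n-1)np(p-1) v^{-n-1} V(∇v)² + (1-n)(2p-1) v^{-n} V(∇v) Δ_p^Ĥ v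
  = div( v^{1-n} X + (1-n)(p-1) v^{-n} V(∇v) ∇_ξV(∇v) )`,
where `X_j = Σᵢ S²_{ij}(W) (∇_ξV)ᵢ(∇v)`. -/
theorem stmt_8
    (n : ℕ) (hn : 2 ≤ n) (p : ℝ) (hp : 1 < p)
    -- the gauge H, smooth away from the origin
    (H : EuclideanSpace ℝ (Fin n) → ℝ)
    (hH_conv : ConvexOn ℝ Set.univ H)
    (hH_hom : ∀ t : ℝ, 0 < t → ∀ ξ : EuclideanSpace ℝ (Fin n), H (t • ξ) = t * H ξ)
    (hH_pos : ∀ ξ : EuclideanSpace ℝ (Fin n), ξ ≠ 0 → 0 < H ξ)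
    (hH_smooth : ContDiffOn ℝ (⊤ : ℕ∞) H {(0 : EuclideanSpace ℝ (Fin n))}ᶜ)
    -- V(ξ) = Ĥ(ξ)^p / p, Ĥ(ξ) = H(-ξ)
    (V : EuclideanSpace ℝ (Fin n) → ℝ)
    (hV : ∀ ξ : EuclideanSpace ℝ (Fin n), V ξ = H (-ξ) ^ p / p)
    -- the open set and the function v
    (Ω : Set (EuclideanSpace ℝ (Fin n))) (hΩ_open : IsOpen Ω)
    (v : EuclideanSpace ℝ (Fin n) → ℝ) (hv : ContDiffOn ℝ 3 v Ω)
    (hv_pos : ∀ x ∈ Ω, 0 < v x)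
    (hv_grad : ∀ x ∈ Ω, gradient v x ≠ 0)
    -- W is the Jacobian matrix of x ↦ ∇_ξ V(∇v(x))
    (W : EuclideanSpace ℝ (Fin n) → Matrix (Fin n) (Fin n) ℝ)
    (hW : ∀ x : EuclideanSpace ℝ (Fin n), ∀ i j : Fin n,
      W x i j = fderiv ℝ (fun y => gradient V (gradient v y) i) x (EuclideanSpace.single j 1))
    -- Y is the vector field v^{1-n} X + (1-n)(p-1) v^{-n} V(∇v) ∇_ξ V(∇v)
    (Y : EuclideanSpace ℝ (Fin n) → Fin n → ℝ)
    (hY : ∀ x : EuclideanSpace ℝ (Fin n), ∀ j : Fin n,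
      Y x j = v x ^ (1 - (n : ℝ)) *
          (∑ i : Fin n, (-(W x j i) + (if i = j then (W x).trace else 0)) *
            gradient V (gradient v x) i) +
        (1 - (n : ℝ)) * (p - 1) * v x ^ (-(n : ℝ)) * V (gradient v x) *
          gradient V (gradient v x) j) :
    ∀ x ∈ Ω,
      2 * v x ^ (1 - (n : ℝ)) * (((W x).trace ^ 2 - (W x * W x).trace) / 2) +
          ((n : ℝ) - 1) * (n : ℝ) * p * (p - 1) * v x ^ (-(n : ℝ) - 1) *
            V (gradient v x) ^ 2 +
          (1 - (n : ℝ)) * (2 * p - 1) * v x ^ (-(n : ℝ)) * V (gradient v x) * (W x).trace =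
        ∑ j : Fin n, fderiv ℝ (fun y => Y y j) x (EuclideanSpace.single j 1) := by
  intro x hx
  classical
  have hxv : 0 < v x := hv_pos x hx
  have hξ : gradient v x ≠ 0 := hv_grad x hx
  have hvC : ContDiffAt ℝ 3 v x := hv.contDiffAt (hΩ_open.mem_nhds hx)
  have hvd : DifferentiableAt ℝ v x := hvC.differentiableAt (by norm_num)
  have hVC : ContDiffAt ℝ 3 V (gradient v x) := V_cd hp hH_pos hH_smooth hV hξ
  have hV2 : ContDiffAt ℝ 2 V (gradient v x) := hVC.of_le (by norm_num)
  have hVd : DifferentiableAt ℝ V (gradient v x) := hVC.differentiableAt (by norm_num)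
  have hgv : ContDiffAt ℝ 2 (gradient v) x := grad_contDiffAt (by norm_num) hvC
  have hgvd : DifferentiableAt ℝ (gradient v) x := hgv.differentiableAt (by norm_num)
  have hGV : ContDiffAt ℝ 2 (gradient V) (gradient v x) := grad_contDiffAt (by norm_num) hVC
  have hu : ∀ i : Fin n, ContDiffAt ℝ 2 (fun y => gradient V (gradient v y) i) x := by
    intro i
    have hcomp : ContDiffAt ℝ 2 (fun y => gradient V (gradient v y)) x := hGV.comp x hgv
    exact ((EuclideanSpace.proj i : ES n →L[ℝ] ℝ).contDiff.contDiffAt).comp x hcomp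
  have hud : ∀ i, DifferentiableAt ℝ (fun y => gradient V (gradient v y) i) x :=
    fun i => (hu i).differentiableAt (by norm_num)
  have hGi : ∀ i : Fin n, DifferentiableAt ℝ (fun ξ => gradient V ξ i) (gradient v x) := by
    intro i
    have h0 : ContDiffAt ℝ 2 (fun ξ : ES n => gradient V ξ i) (gradient v x) :=
      ((EuclideanSpace.proj i : ES n →L[ℝ] ℝ).contDiff.contDiffAt).comp (gradient v x) hGV
    exact h0.differentiableAt (by norm_num)
  have hPc : ContDiffAt ℝ 2 (fun y => V (gradient v y)) x := hV2.comp x hgv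
  have hPd : DifferentiableAt ℝ (fun y => V (gradient v y)) x := hPc.differentiableAt (by norm_num)
  have hca : ∀ (i k : Fin n), fderiv ℝ (fun y => gradient V (gradient v y) i) x (EuclideanSpace.single k 1)
      = ∑ m, fderiv ℝ (fun y => gradient v y m) x (EuclideanSpace.single k 1)
          * fderiv ℝ (fun ξ => gradient V ξ i) (gradient v x) (EuclideanSpace.single m 1) :=
    fun i k => chain_coord (gradient v) (fun ξ => gradient V ξ i) x hgvd (hGi i) k
      (fun f z w => fderiv_expand w) (fun F z hF m w => fderiv_pi_coord hF m w)
  have hcq : ∀ k : Fin n, fderiv ℝ (fun y => V (gradient v y)) x (EuclideanSpace.single k 1)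
      = ∑ m, fderiv ℝ (fun y => gradient v y m) x (EuclideanSpace.single k 1) * gradient V (gradient v x) m := by
    intro k
    have h0 := chain_coord (gradient v) V x hgvd hVd k (fun f z w => fderiv_expand w)
      (fun F z hF m w => fderiv_pi_coord hF m w)
    rw [h0]
    exact Finset.sum_congr rfl fun m _ => by rw [← grad_coord V]
  have hcsym : ∀ (i m : Fin n),
      fderiv ℝ (fun ξ => gradient V ξ i) (gradient v x) (EuclideanSpace.single m 1)
      = fderiv ℝ (fun ξ => gradient V ξ m) (gradient v x) (EuclideanSpace.single i 1) := by
    intro i m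
    have hfun : ∀ jj : Fin n, (fun ξ : ES n => gradient V ξ jj)
        = fun ξ : ES n => fderiv ℝ V ξ (EuclideanSpace.single jj 1) :=
      fun jj => funext fun ξ => grad_coord V ξ jj
    rw [hfun i, hfun m]
    exact clairaut hV2 (EuclideanSpace.single m 1) (EuclideanSpace.single i 1)
  have hk3 : ∀ i : Fin n, (∑ j, fderiv ℝ (fun y => gradient V (gradient v y) j) x (EuclideanSpace.single i 1) * gradient v x j) = (p - 1) * fderiv ℝ (fun y => V (gradient v y)) x (EuclideanSpace.single i 1) := by
    intro i
    have h1 : ∀ j : Fin n, fderiv ℝ (fun y => gradient V (gradient v y) j) x (EuclideanSpace.single i 1) * gradient v x j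
        = ∑ m, fderiv ℝ (fun y => gradient v y m) x (EuclideanSpace.single i 1)
            * fderiv ℝ (fun ξ => gradient V ξ j) (gradient v x) (EuclideanSpace.single m 1)
            * gradient v x j := by
      intro j; rw [hca j i, Finset.sum_mul]
    rw [Finset.sum_congr rfl fun j _ => h1 j, Finset.sum_comm]
    have h2 : ∀ m : Fin n, (∑ j, fderiv ℝ (fun y => gradient v y m) x (EuclideanSpace.single i 1)
        * fderiv ℝ (fun ξ => gradient V ξ j) (gradient v x) (EuclideanSpace.single m 1) * gradient v x j)
        = fderiv ℝ (fun y => gradient v y m) x (EuclideanSpace.single i 1) * ((p - 1) * gradient V (gradient v x) m) := by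
      intro m
      have h3 : ∀ j : Fin n, fderiv ℝ (fun y => gradient v y m) x (EuclideanSpace.single i 1)
          * fderiv ℝ (fun ξ => gradient V ξ j) (gradient v x) (EuclideanSpace.single m 1) * gradient v x j
          = fderiv ℝ (fun y => gradient v y m) x (EuclideanSpace.single i 1)
            * (fderiv ℝ (fun ξ => gradient V ξ m) (gradient v x) (EuclideanSpace.single j 1) * gradient v x j) := by
        intro j; rw [hcsym j m]; ring
      rw [Finset.sum_congr rfl fun j _ => h3 j, ← Finset.mul_sum]
      congr 1
      exact V_euler2 hp hH_hom hH_pos hH_smooth hV hξ m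
    rw [Finset.sum_congr rfl fun m _ => h2 m, hcq i, Finset.mul_sum]
    exact Finset.sum_congr rfl fun m _ => by ring
  have hform : ∀ j : Fin n,
      fderiv ℝ (fun y => Y y j) x (EuclideanSpace.single j 1)
      = (((1 - (n:ℝ)) * v x ^ (1 - (n:ℝ) - 1) * gradient v x j) *
          (∑ i, (-(fderiv ℝ (fun y => gradient V (gradient v y) j) x (EuclideanSpace.single i 1)) + (if i = j then 1 else 0) * (∑ k, fderiv ℝ (fun y => gradient V (gradient v y) k) x (EuclideanSpace.single k 1))) * gradient V (gradient v x) i)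
        + v x ^ (1 - (n:ℝ)) *
          (∑ i, ((-(fderiv ℝ (fun y => fderiv ℝ (fun z => gradient V (gradient v z) j) y (EuclideanSpace.single i 1)) x (EuclideanSpace.single j 1)) + (if i = j then 1 else 0) * (∑ k, fderiv ℝ (fun y => fderiv ℝ (fun z => gradient V (gradient v z) k) y (EuclideanSpace.single k 1)) x (EuclideanSpace.single j 1))) * gradient V (gradient v x) i
            + (-(fderiv ℝ (fun y => gradient V (gradient v y) j) x (EuclideanSpace.single i 1)) + (if i = j then 1 else 0) * (∑ k, fderiv ℝ (fun y => gradient V (gradient v y) k) x (EuclideanSpace.single k 1))) * fderiv ℝ (fun y => gradient V (gradient v y) i) x (EuclideanSpace.single j 1)))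
        + ((1 - (n:ℝ)) * (p - 1)) *
          ((-(n:ℝ) * v x ^ (-(n:ℝ) - 1) * gradient v x j) * (V (gradient v x) * gradient V (gradient v x) j)
            + v x ^ (-(n:ℝ)) * (fderiv ℝ (fun y => V (gradient v y)) x (EuclideanSpace.single j 1) * gradient V (gradient v x) j + V (gradient v x) * fderiv ℝ (fun y => gradient V (gradient v y) j) x (EuclideanSpace.single j 1)))) := by
    intro j
    have hYeq : (fun y => Y y j)
        = fun y => (v y ^ (1 - (n:ℝ))) *
            (∑ i, (-(fderiv ℝ (fun z => gradient V (gradient v z) j) y (EuclideanSpace.single i 1)) + (if i = j then 1 else 0) * (∑ k, fderiv ℝ (fun z => gradient V (gradient v z) k) y (EuclideanSpace.single k 1))) * gradient V (gradient v y) i)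
          + ((1 - (n:ℝ)) * (p - 1)) * (v y ^ (-(n:ℝ))) * V (gradient v y) * gradient V (gradient v y) j := by
      funext y
      rw [hY y j]
      simp only [hW, Matrix.trace, Matrix.diag, ite_mul, one_mul, zero_mul]
    rw [hYeq]
    have hsdiff : ∀ i : Fin n, DifferentiableAt ℝ (fun y => (-(fderiv ℝ (fun z => gradient V (gradient v z) j) y (EuclideanSpace.single i 1)) + (if i = j then 1 else 0) * (∑ k, fderiv ℝ (fun z => gradient V (gradient v z) k) y (EuclideanSpace.single k 1)))) x := by
      intro i
      exact ((diff_fderiv_apply (hu j) (EuclideanSpace.single i 1)).neg).add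
        ((DifferentiableAt.fun_sum (fun k _ => diff_fderiv_apply (hu k) (EuclideanSpace.single k 1))).const_mul _)
    have hcombo := fderiv_combo (x := x) (w := EuclideanSpace.single j 1)
      (fun y => v y ^ (1 - (n:ℝ))) (fun y => v y ^ (-(n:ℝ)))
      (fun y => V (gradient v y)) (fun i y => gradient V (gradient v y) i)
      (fun i y => (-(fderiv ℝ (fun z => gradient V (gradient v z) j) y (EuclideanSpace.single i 1)) + (if i = j then 1 else 0) * (∑ k, fderiv ℝ (fun z => gradient V (gradient v z) k) y (EuclideanSpace.single k 1))))
      ((1 - (n:ℝ)) * (p - 1)) j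
      (hvd.rpow_const (Or.inl hxv.ne')) (hvd.rpow_const (Or.inl hxv.ne')) hPd hud hsdiff
    rw [hcombo]
    have hf1 : fderiv ℝ (fun y => v y ^ (1 - (n:ℝ))) x (EuclideanSpace.single j 1)
        = (1 - (n:ℝ)) * v x ^ (1 - (n:ℝ) - 1) * gradient v x j := by
      rw [(hvd.hasFDerivAt.rpow_const (Or.inl hxv.ne')).fderiv]
      simp only [ContinuousLinearMap.coe_smul', Pi.smul_apply, smul_eq_mul]
      rw [← grad_coord v]
    have hh1 : fderiv ℝ (fun y => v y ^ (-(n:ℝ))) x (EuclideanSpace.single j 1)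
        = -(n:ℝ) * v x ^ (-(n:ℝ) - 1) * gradient v x j := by
      rw [(hvd.hasFDerivAt.rpow_const (Or.inl hxv.ne')).fderiv]
      simp only [ContinuousLinearMap.coe_smul', Pi.smul_apply, smul_eq_mul]
      rw [← grad_coord v]
    have hsv : ∀ i : Fin n, fderiv ℝ (fun y => (-(fderiv ℝ (fun z => gradient V (gradient v z) j) y (EuclideanSpace.single i 1)) + (if i = j then 1 else 0) * (∑ k, fderiv ℝ (fun z => gradient V (gradient v z) k) y (EuclideanSpace.single k 1)))) x (EuclideanSpace.single j 1)
        = -(fderiv ℝ (fun y => fderiv ℝ (fun z => gradient V (gradient v z) j) y (EuclideanSpace.single i 1)) x (EuclideanSpace.single j 1)) + (if i = j then 1 else 0) * (∑ k, fderiv ℝ (fun y => fderiv ℝ (fun z => gradient V (gradient v z) k) y (EuclideanSpace.single k 1)) x (EuclideanSpace.single j 1)) := by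
      intro i
      have hBd : HasFDerivAt (fun y => ∑ k, fderiv ℝ (fun z => gradient V (gradient v z) k) y (EuclideanSpace.single k 1))
          (∑ k, fderiv ℝ (fun y => fderiv ℝ (fun z => gradient V (gradient v z) k) y (EuclideanSpace.single k 1)) x) x :=
        HasFDerivAt.fun_sum (fun k _ => (diff_fderiv_apply (hu k) _).hasFDerivAt)
      have hAd : HasFDerivAt (fun y => fderiv ℝ (fun z => gradient V (gradient v z) j) y (EuclideanSpace.single i 1))
          (fderiv ℝ (fun y => fderiv ℝ (fun z => gradient V (gradient v z) j) y (EuclideanSpace.single i 1)) x) x :=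
        (diff_fderiv_apply (hu j) _).hasFDerivAt
      have hD := (hAd.fun_neg.fun_add (hBd.const_mul ((if i = j then (1:ℝ) else 0)))).fderiv
      rw [hD]
      simp only [ContinuousLinearMap.add_apply, ContinuousLinearMap.neg_apply,
        ContinuousLinearMap.coe_smul', Pi.smul_apply, ContinuousLinearMap.coe_sum',
        Finset.sum_apply, smul_eq_mul]
    have hsum2 : (∑ i, (fderiv ℝ (fun y => (-(fderiv ℝ (fun z => gradient V (gradient v z) j) y (EuclideanSpace.single i 1)) + (if i = j then 1 else 0) * (∑ k, fderiv ℝ (fun z => gradient V (gradient v z) k) y (EuclideanSpace.single k 1)))) x (EuclideanSpace.single j 1) * gradient V (gradient v x) i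
          + (-(fderiv ℝ (fun y => gradient V (gradient v y) j) x (EuclideanSpace.single i 1)) + (if i = j then 1 else 0) * (∑ k, fderiv ℝ (fun y => gradient V (gradient v y) k) x (EuclideanSpace.single k 1))) * fderiv ℝ (fun y => gradient V (gradient v y) i) x (EuclideanSpace.single j 1)))
        = ∑ i, ((-(fderiv ℝ (fun y => fderiv ℝ (fun z => gradient V (gradient v z) j) y (EuclideanSpace.single i 1)) x (EuclideanSpace.single j 1)) + (if i = j then 1 else 0) * (∑ k, fderiv ℝ (fun y => fderiv ℝ (fun z => gradient V (gradient v z) k) y (EuclideanSpace.single k 1)) x (EuclideanSpace.single j 1))) * gradient V (gradient v x) i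
          + (-(fderiv ℝ (fun y => gradient V (gradient v y) j) x (EuclideanSpace.single i 1)) + (if i = j then 1 else 0) * (∑ k, fderiv ℝ (fun y => gradient V (gradient v y) k) x (EuclideanSpace.single k 1))) * fderiv ℝ (fun y => gradient V (gradient v y) i) x (EuclideanSpace.single j 1)) :=
      Finset.sum_congr rfl fun i _ => by rw [hsv i]
    rw [hf1, hh1, hsum2]
  have htr : (W x).trace = ∑ k, fderiv ℝ (fun y => gradient V (gradient v y) k) x (EuclideanSpace.single k 1) := by
    rw [Matrix.trace]
    exact Finset.sum_congr rfl fun k _ => hW x k k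
  have htr2 : (W x * W x).trace = ∑ i, ∑ k, fderiv ℝ (fun y => gradient V (gradient v y) i) x (EuclideanSpace.single k 1) * fderiv ℝ (fun y => gradient V (gradient v y) k) x (EuclideanSpace.single i 1) := by
    rw [Matrix.trace]
    apply Finset.sum_congr rfl
    intro i _
    rw [Matrix.diag, Matrix.mul_apply]
    exact Finset.sum_congr rfl fun k _ => by rw [hW x i k, hW x k i]
  rw [htr, htr2, Finset.sum_congr rfl fun j _ => hform j]
  exact final_algebra p (v x) (V (gradient v x))
    (fun j => gradient v x j) (fun i => gradient V (gradient v x) i)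
    (fun k => fderiv ℝ (fun y => V (gradient v y)) x (EuclideanSpace.single k 1))
    (fun i k => fderiv ℝ (fun y => gradient V (gradient v y) i) x (EuclideanSpace.single k 1))
    (fun i k l => fderiv ℝ (fun y => fderiv ℝ (fun z => gradient V (gradient v z) i) y (EuclideanSpace.single k 1)) x (EuclideanSpace.single l 1))
    (fun i k l => clairaut (hu i) (EuclideanSpace.single l 1) (EuclideanSpace.single k 1))
    (V_euler1 hp hH_hom hH_pos hH_smooth hV hξ) hk3
end
end

section
/- Let n ≥ 2, 1 < p < n, let H be a gauge on ℝ^n with H smooth on ℝ^n \ {0}, set a(ξ) = H(ξ)^{p−1}∇H(ξ), Ĥ(ξ) = H(−ξ) and â(ξ) = Ĥ(ξ)^{p−1}∇Ĥ(ξ). Let Ω ⊆ ℝ^n be open, f continuous, and let u ∈ C²(Ω) satisfy u(x) > 0 and ∇u(x) ≠ 0 for all x ∈ Ω, and solve div(a(∇u)) + f(u) = 0 pointwise in Ω. Then the function v := u^{−p/(n−p)} solves pointwise in Ω the equation Δ_p^Ĥ v = f̂(v) + (n(p−1)/p)·Ĥ(∇v)^p/v, where Δ_p^Ĥ v = div(â(∇v))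 and f̂(t) = (p/(n−p))^{p−1} f(t^{−(n−p)/p}) t^{n(p−1)/p}. -/
open MeasureTheory
open scoped ENNReal NNReal

noncomputable section

section Aux
open InnerProductSpace
variable {F : Type*} [NormedAddCommGroup F] [InnerProductSpace ℝ F] [CompleteSpace F]

/-- `toDual.symm` as a continuous linear map over `ℝ`. -/
def dualIsoCLM (F : Type*) [NormedAddCommGroup F] [InnerProductSpace ℝ F] [CompleteSpace F] :
    StrongDual ℝ F →L[ℝ] F where
  toFun L := (toDual ℝ F).symm L
  map_add' := by simp
  map_smul' := by simp
  cont := (toDual ℝ F).symm.continuous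

theorem dualIsoCLM_apply (L : StrongDual ℝ F) : dualIsoCLM F L = (toDual ℝ F).symm L := rfl

theorem toDual_gradient' (f : F → ℝ) (x : F) : toDual ℝ F (gradient f x) = fderiv ℝ f x :=
  (toDual ℝ F).apply_symm_apply _

theorem inner_gradient_eq (f : F → ℝ) (x w : F) : ⟪gradient f x, w⟫_ℝ = fderiv ℝ f x w := by
  rw [← toDual_gradient']; rfl

/-- Euler identity for 1-homogeneous functions. -/
theorem euler_aux {H : F → ℝ} {ξ : F} (hom : ∀ t : ℝ, 0 < t → H (t • ξ) = t * H ξ)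
    (hd : DifferentiableAt ℝ H ξ) : fderiv ℝ H ξ ξ = H ξ := by
  have h1 : HasDerivAt (fun s : ℝ => H (s • ξ)) (fderiv ℝ H ξ ξ) 1 := by
    have hs : HasDerivAt (fun s : ℝ => s • ξ) ξ 1 := by
      simpa using (hasDerivAt_id (1:ℝ)).smul_const ξ
    have hd' : HasFDerivAt H (fderiv ℝ H ξ) ((1:ℝ) • ξ) := by simpa using hd.hasFDerivAt
    exact hd'.comp_hasDerivAt 1 hs
  have h2 : HasDerivAt (fun s : ℝ => s * H ξ) (fderiv ℝ H ξ ξ) 1 := by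
    apply h1.congr_of_eventuallyEq
    filter_upwards [eventually_gt_nhds (by norm_num : (0:ℝ) < 1)] with s hs
    exact (hom s hs).symm
  exact h2.unique (hasDerivAt_mul_const _)

/-- 0-homogeneity of the differential of a 1-homogeneous function. -/
theorem fderiv_hom_aux {H : F → ℝ} {ξ : F} {t : ℝ}
    (hom : ∀ y : F, H (t • y) = t * H y) (ht : 0 < t)
    (hd : DifferentiableAt ℝ H ξ) (hd2 : DifferentiableAt ℝ H (t • ξ)) :
    fderiv ℝ H (t • ξ) = fderiv ℝ H ξ := by
  have hL : HasFDerivAt (fun y : F => t • y) (t • ContinuousLinearMap.id ℝ F) ξ := by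
    exact (hasFDerivAt_id ξ).const_smul t
  have h1 : HasFDerivAt (fun y => H (t • y))
      ((fderiv ℝ H (t • ξ)).comp (t • ContinuousLinearMap.id ℝ F)) ξ :=
    hd2.hasFDerivAt.comp ξ hL
  have h2 : HasFDerivAt (fun y => t * H y) (t • fderiv ℝ H ξ) ξ := hd.hasFDerivAt.const_mul t
  have h2' : HasFDerivAt (fun y => H (t • y)) (t • fderiv ℝ H ξ) ξ := by
    simpa only [hom] using h2
  have heq := h1.unique h2'
  ext w
  have h3 : t * (fderiv ℝ H (t • ξ)) w = t * (fderiv ℝ H ξ) w := by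
    have h4 := congrFun (congrArg (fun (L : F →L[ℝ] ℝ) => (L : F → ℝ)) heq) w
    simp only [ContinuousLinearMap.comp_apply, ContinuousLinearMap.smul_apply,
      ContinuousLinearMap.id_apply, ContinuousLinearMap.coe_smul', Pi.smul_apply, smul_eq_mul,
      ContinuousLinearMap.map_smul] at h4
    exact h4
  exact mul_left_cancel₀ ht.ne' h3

end Aux

open InnerProductSpace RealInnerProductSpace

/-- The substitution `v = u^{-p/(n-p)}`: if `u ∈ C²(Ω)` is positive with
nonvanishing gradient and solves `div(a(∇u)) + f(u) = 0` pointwise, then `v` solves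
`Δ_p^Ĥ v = f̂(v) + (n(p-1)/p) Ĥ(∇v)^p / v` pointwise, where `Δ_p^Ĥ v = div(â(∇v))`,
`â(ξ) = Ĥ(ξ)^{p-1}∇Ĥ(ξ)`, `Ĥ(ξ) = H(-ξ)` and
`f̂(t) = (p/(n-p))^{p-1} f(t^{-(n-p)/p}) t^{n(p-1)/p}`. -/
theorem stmt_10
    (n : ℕ) (hn : 2 ≤ n) (p : ℝ) (hp : 1 < p) (hpn : p < (n : ℝ))
    -- the gauge H, smooth away from the origin
    (H : EuclideanSpace ℝ (Fin n) → ℝ)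
    (hH_conv : ConvexOn ℝ Set.univ H)
    (hH_hom : ∀ t : ℝ, 0 < t → ∀ ξ : EuclideanSpace ℝ (Fin n), H (t • ξ) = t * H ξ)
    (hH_pos : ∀ ξ : EuclideanSpace ℝ (Fin n), ξ ≠ 0 → 0 < H ξ)
    (hH_smooth : ContDiffOn ℝ (⊤ : ℕ∞) H {(0 : EuclideanSpace ℝ (Fin n))}ᶜ)
    -- a(ξ) = H(ξ)^{p-1} ∇H(ξ), Ĥ(ξ) = H(-ξ), â(ξ) = Ĥ(ξ)^{p-1} ∇Ĥ(ξ)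
    (a : EuclideanSpace ℝ (Fin n) → EuclideanSpace ℝ (Fin n))
    (ha : ∀ ξ : EuclideanSpace ℝ (Fin n), a ξ = H ξ ^ (p - 1) • gradient H ξ)
    (Hh : EuclideanSpace ℝ (Fin n) → ℝ)
    (hHh : ∀ ξ : EuclideanSpace ℝ (Fin n), Hh ξ = H (-ξ))
    (ah : EuclideanSpace ℝ (Fin n) → EuclideanSpace ℝ (Fin n))
    (hah : ∀ ξ : EuclideanSpace ℝ (Fin n), ah ξ = Hh ξ ^ (p - 1) • gradient Hh ξ)
    -- the open set, the nonlinearity, and u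
    (Ω : Set (EuclideanSpace ℝ (Fin n))) (hΩ_open : IsOpen Ω)
    (f : ℝ → ℝ) (hf : Continuous f)
    (u : EuclideanSpace ℝ (Fin n) → ℝ) (hu : ContDiffOn ℝ 2 u Ω)
    (hu_pos : ∀ x ∈ Ω, 0 < u x)
    (hu_grad : ∀ x ∈ Ω, gradient u x ≠ 0)
    -- u solves div(a(∇u)) + f(u) = 0 pointwise in Ω
    (hu_sol : ∀ x ∈ Ω,
      (∑ i : Fin n, fderiv ℝ (fun y => a (gradient u y) i) x (EuclideanSpace.single i 1)) +
        f (u x) = 0)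
    -- v = u^{-p/(n-p)}
    (v : EuclideanSpace ℝ (Fin n) → ℝ)
    (hv_def : ∀ x : EuclideanSpace ℝ (Fin n), v x = u x ^ (-(p / ((n : ℝ) - p)))) :
    -- conclusion: Δ_p^Ĥ v = f̂(v) + (n(p-1)/p) Ĥ(∇v)^p / v pointwise in Ω
    ∀ x ∈ Ω,
      (∑ i : Fin n, fderiv ℝ (fun y => ah (gradient v y) i) x (EuclideanSpace.single i 1)) =
        (p / ((n : ℝ) - p)) ^ (p - 1) * f (v x ^ (-(((n : ℝ) - p) / p))) *
            v x ^ ((n : ℝ) * (p - 1) / p) +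
          ((n : ℝ) * (p - 1) / p) * Hh (gradient v x) ^ p / v x := by
  set q : ℝ := p / ((n : ℝ) - p) with hq_def
  have hp0 : (0:ℝ) < p := lt_trans one_pos hp
  have hnp : (0:ℝ) < (n:ℝ) - p := sub_pos.2 hpn
  have hq : 0 < q := div_pos hp0 hnp
  set α : ℝ := (-q - 1) * (p - 1) with hα_def
  -- differentiability of H and gradient H away from 0
  have hHdiff : ∀ ξ : EuclideanSpace ℝ (Fin n), ξ ≠ 0 → DifferentiableAt ℝ H ξ := fun ξ hξ =>
    (hH_smooth.contDiffAt (isOpen_compl_singleton.mem_nhds hξ)).differentiableAt (by simp)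
  have hfHd : ContDiffOn ℝ (⊤ : ℕ∞) (fderiv ℝ H) {(0 : EuclideanSpace ℝ (Fin n))}ᶜ := by
    exact hH_smooth.fderiv_of_isOpen (m := (⊤:ℕ∞)) isOpen_compl_singleton (by exact_mod_cast le_top)
  have hGdiff : ∀ ξ : EuclideanSpace ℝ (Fin n), ξ ≠ 0 → DifferentiableAt ℝ (gradient H) ξ := by
    intro ξ hξ
    have h1 : DifferentiableAt ℝ (fderiv ℝ H) ξ :=
      (hfHd.contDiffAt (isOpen_compl_singleton.mem_nhds hξ)).differentiableAt (by simp)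
    exact (dualIsoCLM (EuclideanSpace ℝ (Fin n))).differentiableAt.comp ξ h1
  have hadiff : ∀ ξ : EuclideanSpace ℝ (Fin n), ξ ≠ 0 → DifferentiableAt ℝ a ξ := by
    intro ξ hξ
    have haf : a = fun ξ => H ξ ^ (p - 1) • gradient H ξ := funext ha
    rw [haf]
    exact ((hHdiff ξ hξ).rpow_const (Or.inl (hH_pos ξ hξ).ne')).smul (hGdiff ξ hξ)
  -- differentiability of u and gradient u on Ω
  have hud : ∀ y ∈ Ω, DifferentiableAt ℝ u y := fun y hy =>
    (hu.contDiffAt (hΩ_open.mem_nhds hy)).differentiableAt two_ne_zero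
  have hfud : ContDiffOn ℝ 1 (fderiv ℝ u) Ω := by
    apply hu.fderiv_of_isOpen hΩ_open
    norm_num
  have hgud : ∀ y ∈ Ω, DifferentiableAt ℝ (gradient u) y := by
    intro y hy
    have h1 : DifferentiableAt ℝ (fderiv ℝ u) y :=
      (hfud.contDiffAt (hΩ_open.mem_nhds hy)).differentiableAt one_ne_zero
    exact (dualIsoCLM (EuclideanSpace ℝ (Fin n))).differentiableAt.comp y h1
  -- gradient of v on Ω
  have hvfun : v = fun y => u y ^ (-q) := funext hv_def
  have hvF : ∀ y ∈ Ω, HasFDerivAt v ((-q * u y ^ (-q - 1)) • fderiv ℝ u y) y := by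
    intro y hy
    have h1 : HasDerivAt (fun z : ℝ => z ^ (-q)) (-q * u y ^ (-q - 1)) (u y) :=
      Real.hasDerivAt_rpow_const (Or.inl (hu_pos y hy).ne')
    have := h1.comp_hasFDerivAt y (hud y hy).hasFDerivAt
    rw [hvfun]
    exact this
  have hgv : ∀ y ∈ Ω, gradient v y = (-q * u y ^ (-q - 1)) • gradient u y := by
    intro y hy
    have := ((hvF y hy).hasGradientAt).gradient
    rw [this]
    simp [gradient]
  -- Euler identity
  have hEuler : ∀ ξ : EuclideanSpace ℝ (Fin n), ξ ≠ 0 → ⟪ξ, gradient H ξ⟫_ℝ = H ξ := by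
    intro ξ hξ
    rw [real_inner_comm, inner_gradient_eq]
    exact euler_aux (fun t ht => hH_hom t ht ξ) (hHdiff ξ hξ)
  -- homogeneity of gradient H and a
  have hGhom : ∀ t : ℝ, 0 < t → ∀ ξ : EuclideanSpace ℝ (Fin n), ξ ≠ 0 → gradient H (t • ξ) = gradient H ξ := by
    intro t ht ξ hξ
    have := fderiv_hom_aux (fun y => hH_hom t ht y) ht (hHdiff ξ hξ)
      (hHdiff (t • ξ) (smul_ne_zero ht.ne' hξ))
    unfold gradient
    rw [this]
  have ha_hom : ∀ t : ℝ, 0 < t → ∀ ξ : EuclideanSpace ℝ (Fin n), ξ ≠ 0 → a (t • ξ) = t ^ (p - 1) • a ξ := by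
    intro t ht ξ hξ
    rw [ha, ha, hH_hom t ht ξ, hGhom t ht ξ hξ, Real.mul_rpow ht.le (hH_pos ξ hξ).le, mul_smul]
  -- ah ξ = -(a (-ξ))
  have hah_neg : ∀ ξ : EuclideanSpace ℝ (Fin n), ξ ≠ 0 → ah ξ = -(a (-ξ)) := by
    intro ξ hξ
    have hHhfun : Hh = fun ζ => H (-ζ) := funext hHh
    have hnξ : (-ξ : EuclideanSpace ℝ (Fin n)) ≠ 0 := neg_ne_zero.2 hξ
    have hneg : HasFDerivAt (fun ζ : EuclideanSpace ℝ (Fin n) => -ζ) (-(ContinuousLinearMap.id ℝ (EuclideanSpace ℝ (Fin n)))) ξ := by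
      exact (hasFDerivAt_id (𝕜 := ℝ) ξ).neg
    have h1 : HasFDerivAt (fun ζ : EuclideanSpace ℝ (Fin n) => H (-ζ))
        ((fderiv ℝ H (-ξ)).comp (-(ContinuousLinearMap.id ℝ (EuclideanSpace ℝ (Fin n))))) ξ :=
      (hHdiff _ hnξ).hasFDerivAt.comp ξ hneg
    have hcomp : (fderiv ℝ H (-ξ)).comp (-(ContinuousLinearMap.id ℝ (EuclideanSpace ℝ (Fin n)))) = -(fderiv ℝ H (-ξ)) := by
      ext w; simp
    rw [hcomp] at h1
    have h2 : fderiv ℝ Hh ξ = -(fderiv ℝ H (-ξ)) := by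
      rw [hHhfun]; exact h1.fderiv
    have h3 : gradient Hh ξ = -(gradient H (-ξ)) := by
      unfold gradient
      rw [h2, map_neg]
    rw [hah, h3, hHh, smul_neg, ha]
  -- the key pointwise identity on Ω
  have hgvne : ∀ y ∈ Ω, gradient v y ≠ 0 := by
    intro y hy
    rw [hgv y hy]
    exact smul_ne_zero (by
      have := Real.rpow_pos_of_pos (hu_pos y hy) (-q - 1)
      nlinarith) (hu_grad y hy)
  have E1 : ∀ y ∈ Ω, ah (gradient v y) = -((q ^ (p - 1) * u y ^ α) • a (gradient u y)) := by
    intro y hy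
    have hcy : (0:ℝ) < q * u y ^ (-q - 1) :=
      mul_pos hq (Real.rpow_pos_of_pos (hu_pos y hy) _)
    have hneg_gv : -(gradient v y) = (q * u y ^ (-q - 1)) • gradient u y := by
      rw [hgv y hy, ← neg_smul]; ring_nf
    rw [hah_neg _ (hgvne y hy), hneg_gv, ha_hom _ hcy _ (hu_grad y hy)]
    congr 1
    rw [Real.mul_rpow hq.le (Real.rpow_nonneg (hu_pos y hy).le _),
      ← Real.rpow_mul (hu_pos y hy).le]
  -- now the pointwise computation
  intro x hx
  have hgx := hu_grad x hx
  have hux := hu_pos x hx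
  have hHx : 0 < H (gradient u x) := hH_pos _ hgx
  set c : ℝ := q ^ (p - 1) * u x ^ α with hc_def
  set K : ℝ := q ^ (p - 1) * (α * u x ^ (α - 1)) with hK_def
  have hφd : DifferentiableAt ℝ (fun y => q ^ (p - 1) * u y ^ α) x :=
    ((hud x hx).rpow_const (Or.inl hux.ne')).const_mul _
  have hφF : HasFDerivAt (fun y => q ^ (p - 1) * u y ^ α) (K • fderiv ℝ u x) x := by
    have h1 : HasDerivAt (fun z : ℝ => q ^ (p - 1) * z ^ α)
        (q ^ (p - 1) * (α * u x ^ (α - 1))) (u x) :=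
      (Real.hasDerivAt_rpow_const (Or.inl hux.ne')).const_mul (q ^ (p - 1))
    exact h1.comp_hasFDerivAt x (hud x hx).hasFDerivAt
  have hAd : ∀ i : Fin n, DifferentiableAt ℝ (fun y => a (gradient u y) i) x := by
    intro i
    have h1 : DifferentiableAt ℝ (fun y => a (gradient u y)) x :=
      (hadiff _ hgx).comp x (hgud x hx)
    exact (EuclideanSpace.proj (𝕜 := ℝ) i).differentiableAt.comp x h1
  have hDu : ∀ i : Fin n, fderiv ℝ u x (EuclideanSpace.single i 1) = gradient u x i := by
    intro i
    rw [← inner_gradient_eq, EuclideanSpace.inner_single_right]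
    simp
  have hfeq : ∀ i : Fin n,
      fderiv ℝ (fun y => ah (gradient v y) i) x (EuclideanSpace.single i 1) =
      -(c * fderiv ℝ (fun y => a (gradient u y) i) x (EuclideanSpace.single i 1) +
        a (gradient u x) i * (K * gradient u x i)) := by
    intro i
    have heq : (fun y => ah (gradient v y) i) =ᶠ[nhds x]
        (fun y => -((q ^ (p - 1) * u y ^ α) * a (gradient u y) i)) := by
      filter_upwards [hΩ_open.mem_nhds hx] with y hy
      rw [E1 y hy]
      simp
    rw [heq.fderiv_eq, fderiv_fun_neg, fderiv_fun_mul hφd (hAd i), hφF.fderiv]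
    simp only [ContinuousLinearMap.neg_apply, ContinuousLinearMap.add_apply,
      ContinuousLinearMap.smul_apply, smul_eq_mul, hDu i, hc_def]
  have hsum1 : (∑ i : Fin n,
      fderiv ℝ (fun y => a (gradient u y) i) x (EuclideanSpace.single i 1)) = -f (u x) := by
    have := hu_sol x hx; linarith
  have hsum2 : (∑ i : Fin n, a (gradient u x) i * gradient u x i) =
      H (gradient u x) ^ p := by
    have h1 : (∑ i : Fin n, a (gradient u x) i * gradient u x i) =
        ⟪a (gradient u x), gradient u x⟫_ℝ := by
      rw [PiLp.inner_apply]
      simp [RCLike.inner_apply, mul_comm]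
    rw [h1, ha, real_inner_smul_left, real_inner_comm, hEuler _ hgx,
      ← Real.rpow_add_one hHx.ne', sub_add_cancel]
  have key : (∑ i : Fin n,
      fderiv ℝ (fun y => ah (gradient v y) i) x (EuclideanSpace.single i 1)) =
      c * f (u x) - K * H (gradient u x) ^ p := by
    calc (∑ i : Fin n,
        fderiv ℝ (fun y => ah (gradient v y) i) x (EuclideanSpace.single i 1))
        = ∑ i : Fin n, ((-c) *
            fderiv ℝ (fun y => a (gradient u y) i) x (EuclideanSpace.single i 1) +
            (-K) * (a (gradient u x) i * gradient u x i)) := by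
          refine Finset.sum_congr rfl fun i _ => ?_
          rw [hfeq i]; ring
      _ = (-c) * (∑ i : Fin n,
            fderiv ℝ (fun y => a (gradient u y) i) x (EuclideanSpace.single i 1)) +
            (-K) * (∑ i : Fin n, a (gradient u x) i * gradient u x i) := by
          rw [Finset.sum_add_distrib, ← Finset.mul_sum, ← Finset.mul_sum]
      _ = c * f (u x) - K * H (gradient u x) ^ p := by
          rw [hsum1, hsum2]; ring
  rw [key]
  have hvx : v x = u x ^ (-q) := hv_def x
  have R1 : v x ^ (-(((n:ℝ) - p) / p)) = u x := by
    rw [hvx, ← Real.rpow_mul hux.le]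
    rw [show (-q) * (-(((n:ℝ) - p) / p)) = 1 by rw [hq_def]; field_simp]
    exact Real.rpow_one _
  have R2 : v x ^ ((n:ℝ) * (p - 1) / p) = u x ^ α := by
    rw [hvx, ← Real.rpow_mul hux.le]
    congr 1
    rw [hα_def, hq_def]; field_simp; ring
  have hcx : (0:ℝ) < q * u x ^ (-q - 1) := mul_pos hq (Real.rpow_pos_of_pos hux _)
  have R3 : Hh (gradient v x) = (q * u x ^ (-q - 1)) * H (gradient u x) := by
    rw [hHh]
    have hng : -(gradient v x) = (q * u x ^ (-q - 1)) • gradient u x := by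
      rw [hgv x hx, ← neg_smul]; ring_nf
    rw [hng, hH_hom _ hcx]
  rw [R1, R2, R3, hvx, Real.mul_rpow hcx.le hHx.le,
    Real.mul_rpow hq.le (Real.rpow_nonneg hux.le _), ← Real.rpow_mul hux.le,
    Real.rpow_neg hux.le, div_inv_eq_mul]
  have hexp : u x ^ ((-q - 1) * p) * u x ^ q = u x ^ (α - 1) := by
    rw [← Real.rpow_add hux]; congr 1; rw [hα_def]; ring
  have hqp : q ^ p = q ^ (p - 1) * q := by
    rw [← Real.rpow_add_one hq.ne', sub_add_cancel]
  have hcoef : (n:ℝ) * (p - 1) / p * q = -α := by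
    rw [hα_def, hq_def]; field_simp; ring
  rw [hc_def, hK_def]
  linear_combination (-((n:ℝ) * (p - 1) / p) * q ^ p * H (gradient u x) ^ p) * hexp +
    (-((n:ℝ) * (p - 1) / p) * u x ^ (α - 1) * H (gradient u x) ^ p) * hqp +
    (-(q ^ (p - 1)) * u x ^ (α - 1) * H (gradient u x) ^ p) * hcoef
end
end

section
/- Let n ≥ 2, let U ⊆ ℝ^n be a connected open set, let g : U → ℝ^n be of class C², and let λ : U → ℝ be a function such that the Jacobian matrix of g satisfies Dg(x) = λ(x)·Id for every x ∈ U (that is, ∂_j g_i(x) = λ(x)δ_{ij} for all i, j). Then λ is constant on U, and there exists c ∈ ℝ^n such that g(x) = λx + c for all x ∈ U. -/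
open MeasureTheory
open scoped ENNReal NNReal

noncomputable section

open Metric Set

theorem aux_const_of_hasFDerivAt_zero
    {E F : Type*} [NormedAddCommGroup E] [NormedSpace ℝ E]
    [NormedAddCommGroup F] [NormedSpace ℝ F]
    {U : Set E} (hU : IsOpen U) (hc : IsPreconnected U) {f : E → F}
    (hf : ∀ x ∈ U, HasFDerivAt f (0 : E →L[ℝ] F) x) {x y : E} (hx : x ∈ U) (hy : y ∈ U) :
    f x = f y := by
  have key : ∀ z ∈ U, ∃ r > 0, ball z r ⊆ U ∧ ∀ w ∈ ball z r, f w = f z := by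
    intro z hz
    obtain ⟨r, hr, hball⟩ := Metric.isOpen_iff.1 hU z hz
    refine ⟨r, hr, hball, fun w hw => ?_⟩
    have hdiff : DifferentiableOn ℝ f (ball z r) :=
      fun w hw => ((hf w (hball hw)).differentiableAt).differentiableWithinAt
    refine (convex_ball z r).is_const_of_fderivWithin_eq_zero hdiff (fun w hw => ?_)
      hw (mem_ball_self hr)
    rw [fderivWithin_of_isOpen isOpen_ball hw]
    exact (hf w (hball hw)).fderiv
  classical
  set V₁ : Set E := {w | ∃ z r, 0 < r ∧ ball z r ⊆ U ∧ (∀ w' ∈ ball z r, f w' = f z) ∧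
    f z = f x ∧ w ∈ ball z r} with hV₁
  set V₂ : Set E := {w | ∃ z r, 0 < r ∧ ball z r ⊆ U ∧ (∀ w' ∈ ball z r, f w' = f z) ∧
    f z ≠ f x ∧ w ∈ ball z r} with hV₂
  have hopen : ∀ (p : F → Prop), IsOpen {w | ∃ z r, 0 < r ∧ ball z r ⊆ U ∧
      (∀ w' ∈ ball z r, f w' = f z) ∧ p (f z) ∧ w ∈ ball z r} := by
    intro p
    rw [Metric.isOpen_iff]
    rintro w ⟨z, r, hr, hsub, hconst, hp, hw⟩
    obtain ⟨ε, hε, hεball⟩ := Metric.isOpen_iff.1 isOpen_ball w hw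
    exact ⟨ε, hε, fun w' hw' => ⟨z, r, hr, hsub, hconst, hp, hεball hw'⟩⟩
  have hdisj : Disjoint V₁ V₂ := by
    rw [Set.disjoint_left]
    rintro w ⟨z₁, r₁, _, _, hc₁, he₁, hw₁⟩ ⟨z₂, r₂, _, _, hc₂, he₂, hw₂⟩
    exact he₂ ((hc₂ w hw₂).symm.trans ((hc₁ w hw₁).trans he₁))
  have hsub : U ⊆ V₁ ∪ V₂ := by
    intro z hz
    obtain ⟨r, hr, hball, hconst⟩ := key z hz
    by_cases h : f z = f x
    · exact Or.inl ⟨z, r, hr, hball, hconst, h, mem_ball_self hr⟩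
    · exact Or.inr ⟨z, r, hr, hball, hconst, h, mem_ball_self hr⟩
  have hxV : x ∈ V₁ := by
    obtain ⟨r, hr, hball, hconst⟩ := key x hx
    exact ⟨x, r, hr, hball, hconst, rfl, mem_ball_self hr⟩
  have := hc.subset_left_of_subset_union (hopen (· = f x)) (hopen (· ≠ f x)) hdisj hsub
    ⟨x, hx, hxV⟩
  obtain ⟨z, r, hr, hball, hconst, he, hw⟩ := this hy
  rw [(hconst y hw).symm] at he
  exact he.symm

/-- If `g : U → ℝⁿ` is `C²` on a connected open set `U ⊆ ℝⁿ` and its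
Jacobian satisfies `Dg(x) = λ(x)·Id` on `U`, then `λ` is constant on `U` and
`g(x) = λx + c` on `U` for some `c ∈ ℝⁿ`. -/
theorem stmt_12
    (n : ℕ) (hn : 2 ≤ n)
    (U : Set (EuclideanSpace ℝ (Fin n))) (hU_open : IsOpen U) (hU_conn : IsConnected U)
    (g : EuclideanSpace ℝ (Fin n) → EuclideanSpace ℝ (Fin n))
    (hg : ContDiffOn ℝ 2 g U)
    (lam : EuclideanSpace ℝ (Fin n) → ℝ)
    (hlam : ∀ x ∈ U, ∀ z : EuclideanSpace ℝ (Fin n), fderiv ℝ g x z = lam x • z) :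
    ∃ lam₀ : ℝ, (∀ x ∈ U, lam x = lam₀) ∧
      ∃ c : EuclideanSpace ℝ (Fin n), ∀ x ∈ U, g x = lam₀ • x + c := by
  classical

  have hnpos : 0 < n := by omega
  set i₀ : Fin n := ⟨0, hnpos⟩ with hi₀
  set L : (EuclideanSpace ℝ (Fin n)) → ((EuclideanSpace ℝ (Fin n)) →L[ℝ] (EuclideanSpace ℝ (Fin n))) := fun y => fderiv ℝ g y with hL
  -- g is differentiable with derivative L on U
  have hgdiff : ∀ x ∈ U, HasFDerivAt g (L x) x := fun x hx =>
    ((hg.differentiableOn (by norm_num)).differentiableAt (hU_open.mem_nhds hx)).hasFDerivAt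
  -- L is differentiable on U
  have hLdiff : ∀ x ∈ U, DifferentiableAt ℝ L x := by
    have h2 : ContDiffOn ℝ ((1 : ℕ) + 1) g U := by norm_num; exact hg
    have := ((contDiffOn_succ_iff_fderiv_of_isOpen hU_open).1 h2).2.2
    exact fun x hx => (this.differentiableOn (by norm_num)).differentiableAt (hU_open.mem_nhds hx)
  set φ : ((EuclideanSpace ℝ (Fin n)) →L[ℝ] (EuclideanSpace ℝ (Fin n))) →L[ℝ] ℝ :=
    (EuclideanSpace.proj i₀).comp (ContinuousLinearMap.apply ℝ (EuclideanSpace ℝ (Fin n)) (EuclideanSpace.single i₀ 1))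
    with hφ
  have hlam_eq : ∀ y ∈ U, lam y = φ (L y) := by
    intro y hy
    simp only [hφ, ContinuousLinearMap.comp_apply, ContinuousLinearMap.apply_apply,
      PiLp.proj_apply, hL]
    rw [hlam y hy]
    simp [EuclideanSpace.single_apply]
  -- key: lam has zero derivative on U
  have hlam_deriv : ∀ x ∈ U, HasFDerivAt lam (0 : (EuclideanSpace ℝ (Fin n)) →L[ℝ] ℝ) x := by
    intro x hx
    have hLx : HasFDerivAt L (fderiv ℝ L x) x := (hLdiff x hx).hasFDerivAt
    set D := fderiv ℝ L x with hD
    set dlam : (EuclideanSpace ℝ (Fin n)) →L[ℝ] ℝ := φ.comp D with hdlam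
    have hlam_has : HasFDerivAt lam dlam x := by
      have h1 : HasFDerivAt (fun y => φ (L y)) dlam x := φ.hasFDerivAt.comp x hLx
      apply h1.congr_of_eventuallyEq
      filter_upwards [hU_open.mem_nhds hx] with y hy using hlam_eq y hy
    -- D = dlam.smulRight id
    have hDeq : D = dlam.smulRight (ContinuousLinearMap.id ℝ (EuclideanSpace ℝ (Fin n))) := by
      have h2 : HasFDerivAt (fun y => lam y • (ContinuousLinearMap.id ℝ (EuclideanSpace ℝ (Fin n))))
          (dlam.smulRight (ContinuousLinearMap.id ℝ (EuclideanSpace ℝ (Fin n)))) x :=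
        hlam_has.smul_const (ContinuousLinearMap.id ℝ (EuclideanSpace ℝ (Fin n)))
      have h3 : HasFDerivAt L (dlam.smulRight (ContinuousLinearMap.id ℝ (EuclideanSpace ℝ (Fin n)))) x := by
        apply h2.congr_of_eventuallyEq
        filter_upwards [hU_open.mem_nhds hx] with y hy
        ext z
        simp [hL, hlam y hy]
      exact hLx.unique h3
    -- symmetry of second derivative
    have hsymm : ∀ v w : (EuclideanSpace ℝ (Fin n)), D v w = D w v := by
      intro v w
      apply second_derivative_symmetric_of_eventually (f := g) _ hLx v w
      filter_upwards [hU_open.mem_nhds hx] with y hy using hgdiff y hy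
    have hDvw : ∀ v w : (EuclideanSpace ℝ (Fin n)), D v w = dlam v • w := by
      intro v w; rw [hDeq]; simp
    -- dlam vanishes on basis vectors
    have hbasis : ∀ i : Fin n, dlam (EuclideanSpace.single i 1) = 0 := by
      intro i
      obtain ⟨j, hj⟩ : ∃ j : Fin n, j ≠ i := by
        rcases eq_or_ne i ⟨0, hnpos⟩ with h | h
        · exact ⟨⟨1, by omega⟩, by simp [h, Fin.ext_iff]⟩
        · exact ⟨⟨0, hnpos⟩, fun h' => h h'.symm⟩
      have := hsymm (EuclideanSpace.single i 1) (EuclideanSpace.single j 1)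
      rw [hDvw, hDvw] at this
      have h4 := congrArg (fun v : (EuclideanSpace ℝ (Fin n)) => v j) this
      simpa [EuclideanSpace.single_apply, hj, hj.symm] using h4
    have hdlam0 : dlam = 0 := by
      apply ContinuousLinearMap.coe_injective
      apply Module.Basis.ext (EuclideanSpace.basisFun (Fin n) ℝ).toBasis
      intro i
      simp only [OrthonormalBasis.coe_toBasis, EuclideanSpace.basisFun_apply]
      simpa using hbasis i
    rwa [hdlam0] at hlam_has
  obtain ⟨x₀, hx₀⟩ := hU_conn.nonempty
  refine ⟨lam x₀, fun x hx => aux_const_of_hasFDerivAt_zero hU_open hU_conn.isPreconnected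
    hlam_deriv hx hx₀, g x₀ - lam x₀ • x₀, fun x hx => ?_⟩
  have hconst : (fun y => g y - lam x₀ • y) x = (fun y => g y - lam x₀ • y) x₀ := by
    apply aux_const_of_hasFDerivAt_zero hU_open hU_conn.isPreconnected _ hx hx₀
    intro y hy
    have hlamy : lam y = lam x₀ :=
      aux_const_of_hasFDerivAt_zero hU_open hU_conn.isPreconnected hlam_deriv hy hx₀
    have h1 : HasFDerivAt (fun z => g z - lam x₀ • z)
        (L y - lam x₀ • ContinuousLinearMap.id ℝ (EuclideanSpace ℝ (Fin n))) y :=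
      (hgdiff y hy).sub ((hasFDerivAt_id y).const_smul (lam x₀))
    have h2 : L y - lam x₀ • ContinuousLinearMap.id ℝ (EuclideanSpace ℝ (Fin n)) = 0 := by
      ext z
      simp [hL, hlam y hy, hlamy, sub_eq_zero]
    rwa [h2] at h1
  simp only at hconst
  calc g x = lam x₀ • x + (g x - lam x₀ • x) := by abel
  _ = lam x₀ • x + (g x₀ - lam x₀ • x₀) := by
      rw [hconst]
end
end
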